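/- Let κ = ρe^{2πip/q} with 0 < ρ < 1, gcd(p,q) = 1, q odd, q ≥ 3, and set β = ρ^{−q} > 1. Suppose (a_k)_{k≥0} ∈ {−1,+1}^ℕ is a unique address in A_κ, i.e. π(a) = Σ a_k κ^k has no other representation Σ b_k κ^k with b ∈ {−1,+1}^ℕ. Then for each ℓ ∈ {0,…,q−1}, the real number Σ_{j≥0} a_{qj+ℓ} β^{−j} has a unique representation of the form Σ_{j≥0} c_j β^{−j} with c_j ∈ {−1,+1} (namely c_j = a_{qj+ℓ}). -/

import Mathlib

open Complex

theorem unique_address_projects_to_unique_beta_expansion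
    (ρ : ℝ) (hρ0 : 0 < ρ) (hρ1 : ρ < 1)
    (p q : ℕ) (hpq : Nat.Coprime p q) (hq_odd : Odd q) (hq3 : 3 ≤ q)
    (κ : ℂ) (hκ : κ = (ρ : ℂ) * Complex.exp (2 * Real.pi * Complex.I * p / q))
    (a : ℕ → ℝ) (ha : ∀ k, a k = 1 ∨ a k = -1)
    (huniq : ∀ b : ℕ → ℝ, (∀ k, b k = 1 ∨ b k = -1) →
      (∑' k : ℕ, (b k : ℂ) * κ ^ k) = (∑' k : ℕ, (a k : ℂ) * κ ^ k) → b = a) :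
    ∀ l < q, ∀ c : ℕ → ℝ, (∀ j, c j = 1 ∨ c j = -1) →
      (∑' j : ℕ, c j * (ρ ^ q) ^ j) = (∑' j : ℕ, a (q * j + l) * (ρ ^ q) ^ j) →
      c = fun j => a (q * j + l) := by
  intro l hl c hc hsum
  have hq0 : 0 < q := by omega
  set r : ℝ := ρ ^ q with hr
  have hr0 : 0 < r := pow_pos hρ0 q
  have hr1 : r < 1 := pow_lt_one₀ hρ0.le hρ1 (by omega)
  -- κ^q is real
  have hκq : κ ^ q = (r : ℂ) := by
    have hqC : (q : ℂ) ≠ 0 := Nat.cast_ne_zero.mpr (by omega)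
    rw [hκ, mul_pow, ← Complex.exp_nat_mul]
    have h1 : (q : ℂ) * (2 * Real.pi * Complex.I * p / q)
        = (p : ℂ) * (2 * Real.pi * Complex.I) := by
      field_simp
    rw [h1, Complex.exp_nat_mul_two_pi_mul_I]
    push_cast [hr]; ring
  -- norm of κ
  have hκn : ‖κ‖ = ρ := by
    rw [hκ, norm_mul, Complex.norm_exp]
    have : (2 * (Real.pi : ℂ) * Complex.I * p / q).re = 0 := by
      have : (2 * (Real.pi : ℂ) * Complex.I * p / q)
          = ((2 * Real.pi * p / q : ℝ) : ℂ) * Complex.I := by push_cast; ring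
      rw [this]; simp
    rw [this, Real.exp_zero, mul_one, Complex.norm_real,
      Real.norm_of_nonneg hρ0.le]
  -- summability lemmas
  have hsumm : ∀ s : ℕ → ℝ, (∀ k, s k = 1 ∨ s k = -1) →
      Summable (fun k : ℕ => (s k : ℂ) * κ ^ k) := by
    intro s hs
    apply Summable.of_norm_bounded
      (summable_geometric_of_lt_one hρ0.le hρ1)
    intro k
    rw [norm_mul, norm_pow, hκn, Complex.norm_real]
    rcases hs k with h | h <;> simp [h]
  have hsummR : ∀ s : ℕ → ℝ, (∀ k, s k = 1 ∨ s k = -1) →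
      Summable (fun j : ℕ => s j * r ^ j) := by
    intro s hs
    apply Summable.of_norm_bounded
      (summable_geometric_of_lt_one hr0.le hr1)
    intro j
    rw [Real.norm_eq_abs, abs_mul, _root_.abs_pow, abs_of_pos hr0]
    rcases hs j with h | h <;> simp [h]
  -- the spliced sequence
  set b : ℕ → ℝ := fun k => if k % q = l then c (k / q) else a k with hbdef
  have hb : ∀ k, b k = 1 ∨ b k = -1 := by
    intro k
    by_cases h : k % q = l <;> simp only [hbdef, h, if_true, if_false,
      reduceIte] <;> [exact hc _; exact ha _]
  have hbi : ∀ j : ℕ, b (q * j + l) = c j := by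
    intro j
    have h1 : (q * j + l) % q = l := by
      rw [Nat.mul_add_mod, Nat.mod_eq_of_lt hl]
    have h2 : (q * j + l) / q = j := by
      rw [Nat.mul_add_div hq0, Nat.div_eq_of_lt hl, add_zero]
    simp [hbdef, h1, h2]
  -- the real difference series sums to 0
  have hrsum : ∑' j : ℕ, (c j - a (q * j + l)) * r ^ j = 0 := by
    have h := Summable.tsum_sub (hsummR c hc) (hsummR (fun j => a (q * j + l)) (fun j => ha _))
    simp only [sub_mul] at h ⊢
    rw [h, hsum, sub_self]
  -- injective indexing
  set i : ℕ → ℕ := fun j => q * j + l with hidef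
  have hinj : Function.Injective i := by
    intro x y hxy
    simp only [hidef] at hxy
    have hxy' : q * x = q * y := by omega
    exact Nat.eq_of_mul_eq_mul_left hq0 hxy'
  set f : ℕ → ℂ := fun k => ((b k - a k : ℝ) : ℂ) * κ ^ k with hfdef
  have hfz : ∀ x, x ∉ Set.range i → f x = 0 := by
    intro x hx
    have hmod : x % q ≠ l := by
      intro h
      exact hx ⟨x / q, by simp only [hidef]; rw [← h, Nat.div_add_mod]⟩
    simp [hfdef, hbdef, hmod]
  have hfsum : ∑' k : ℕ, f k = 0 := by
    have hsupp : Function.support f ⊆ Set.range i := by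
      intro x hx
      by_contra hmem
      exact hx (hfz x hmem)
    rw [← hinj.tsum_eq hsupp]
    have heq : ∀ j : ℕ, f (i j) = κ ^ l * (((c j - a (q * j + l)) * r ^ j : ℝ) : ℂ) := by
      intro j
      simp only [hfdef, hidef, hbi]
      rw [pow_add, pow_mul, hκq]
      push_cast
      ring
    rw [tsum_congr heq, tsum_mul_left, ← Complex.ofReal_tsum, hrsum]
    simp
  -- complex sums agree
  have hkey : (∑' k : ℕ, (b k : ℂ) * κ ^ k) = ∑' k : ℕ, (a k : ℂ) * κ ^ k := by
    have h := Summable.tsum_sub (hsumm b hb) (hsumm a ha)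
    have h2 : ∑' k : ℕ, ((b k : ℂ) * κ ^ k - (a k : ℂ) * κ ^ k) = 0 := by
      rw [← hfsum]
      apply tsum_congr
      intro k
      simp only [hfdef]
      push_cast
      ring
    rw [h2] at h
    linear_combination -h
  have hba := huniq b hb hkey
  funext j
  rw [← hbi j, hba]
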